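/- For every tree T, there exists a minimum-cardinality fixing set of T consisting entirely of leaves of T. -/

import Mathlib

open SimpleGraph

/-- A set `S` of vertices is a fixing set of `G` if the only automorphism of `G`
fixing every vertex of `S` is the identity. -/
def IsFixingSet {V : Type*} (G : SimpleGraph V) (S : Set V) : Prop :=
  ∀ φ : G ≃g G, (∀ v ∈ S, φ v = v) → ∀ v, φ v = v

/-- The fixing number of a finite graph: the minimum cardinality of a fixing set. -/
noncomputable def fixingNumber {V : Type*} [Fintype V] (G : SimpleGraph V) : ℕ :=
  sInf {n | ∃ S : Finset V, S.card = n ∧ IsFixingSet G ↑S}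

/-- A coloring is distinguishing if the only color-preserving automorphism is the identity. -/
def IsDistinguishingColoring {V α : Type*} (G : SimpleGraph V) (c : V → α) : Prop :=
  ∀ φ : G ≃g G, (∀ v, c (φ v) = c v) → ∀ v, φ v = v

/-- `G` is `D`-distinguishable if it has a distinguishing coloring with at most `D` colors. -/
def Distinguishable {V : Type*} (G : SimpleGraph V) (D : ℕ) : Prop :=
  ∃ c : V → Fin D, IsDistinguishingColoring G c

/-- The distinguishing number of `G`. -/
noncomputable def distinguishingNumber {V : Type*} (G : SimpleGraph V) : ℕ :=
  sInf {D | Distinguishable G D}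

/-- Eccentricity of a vertex: the supremum of distances to other vertices. -/
noncomputable def ecc {V : Type*} (G : SimpleGraph V) (v : V) : ℕ :=
  sSup (Set.range (G.dist v))

section TreeAux
variable {V : Type*} {G : SimpleGraph V}

private lemma list_map_fix {f : V → V} :
    ∀ {l : List V}, l.map f = l → ∀ a ∈ l, f a = a := by
  intro l
  induction l with
  | nil => intro _ a ha; simp at ha
  | cons b t ih =>
    intro h a ha
    rw [List.map_cons, List.cons_eq_cons] at h
    rcases List.mem_cons.1 ha with rfl | ha'
    · exact h.1
    · exact ih h.2 a ha'

lemma tree_path_unique (hT : G.IsTree) {u v : V} {p q : G.Walk u v}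
    (hp : p.IsPath) (hq : q.IsPath) : p = q :=
  (hT.existsUnique_path u v).unique hp hq

lemma tree_length_eq_dist (hT : G.IsTree) {u v : V} {p : G.Walk u v} (hp : p.IsPath) :
    p.length = G.dist u v := by
  classical
  refine le_antisymm ?_ (SimpleGraph.dist_le p)
  obtain ⟨w, hw⟩ := (hT.isConnected.preconnected u v).exists_walk_length_eq_dist
  calc p.length = w.bypass.length := by
        rw [tree_path_unique hT hp w.bypass_isPath]
    _ ≤ w.length := w.length_bypass_le
    _ = G.dist u v := hw

lemma tree_iso_dist (hT : G.IsTree) (φ : G ≃g G) (u v : V) :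
    G.dist (φ u) (φ v) = G.dist u v := by
  have key : ∀ (ψ : G ≃g G) (a b : V), G.dist (ψ a) (ψ b) ≤ G.dist a b := by
    intro ψ a b
    obtain ⟨w, hw⟩ := (hT.isConnected.preconnected a b).exists_walk_length_eq_dist
    calc G.dist (ψ a) (ψ b) ≤ (w.map ψ.toHom).length := SimpleGraph.dist_le _
      _ = w.length := by simp
      _ = G.dist a b := hw
  refine le_antisymm (key φ u v) ?_
  have := key φ.symm (φ u) (φ v)
  simpa using this

lemma tree_fix_path (hT : G.IsTree) (φ : G ≃g G) {x y : V} (hx : φ x = x) (hy : φ y = y)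
    {p : G.Walk x y} (hp : p.IsPath) : ∀ v ∈ p.support, φ v = v := by
  have hinj : Function.Injective (φ.toHom : V → V) := φ.toEquiv.injective
  have hq : ((p.map φ.toHom).copy hx hy).IsPath :=
    (Walk.isPath_copy _ hx hy).2 (Walk.map_isPath_of_injective hinj hp)
  have heq : (p.map φ.toHom).copy hx hy = p := tree_path_unique hT hq hp
  have hsupp : p.support.map (φ.toHom : V → V) = p.support := by
    have := congrArg Walk.support heq
    rwa [Walk.support_copy, Walk.support_map] at this
  intro v hv
  exact list_map_fix hsupp v hv

lemma tree_dist_split (hT : G.IsTree) {x y m : V} {p : G.Walk x y} (hp : p.IsPath)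
    (hm : m ∈ p.support) : G.dist x y = G.dist x m + G.dist m y := by
  classical
  have hspec := congrArg Walk.length (Walk.take_spec p hm)
  rw [Walk.length_append, tree_length_eq_dist hT hp, tree_length_eq_dist hT (hp.takeUntil hm),
    tree_length_eq_dist hT (hp.dropUntil hm)] at hspec
  omega

lemma tree_path_support_subset_walk (hT : G.IsTree) {x y : V} {p : G.Walk x y}
    (hp : p.IsPath) (w : G.Walk x y) : p.support ⊆ w.support := by
  classical
  rw [tree_path_unique hT hp w.bypass_isPath]
  exact w.support_bypass_subset

lemma tree_mem_or (hT : G.IsTree) {c1 c2 m x : V} {p : G.Walk c1 c2} (hp : p.IsPath)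
    (hm : m ∈ p.support) (q1 : G.Walk x c1) (q2 : G.Walk x c2) :
    m ∈ q1.support ∨ m ∈ q2.support := by
  have := tree_path_support_subset_walk hT hp (q1.reverse.append q2) hm
  rw [Walk.mem_support_append_iff, Walk.support_reverse, List.mem_reverse] at this
  exact this

lemma tree_adj_dist_ne (hT : G.IsTree) {c1 c2 : V} (h : G.Adj c1 c2) (x : V) :
    G.dist x c1 ≠ G.dist x c2 := by
  classical
  obtain ⟨p, hp, -⟩ := hT.existsUnique_path x c1
  by_cases hc : c2 ∈ p.support
  · have h1 := tree_dist_split hT hp hc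
    have h2 : G.dist c2 c1 = 1 := SimpleGraph.dist_eq_one_iff_adj.2 h.symm
    omega
  · have hpath : (p.concat h).IsPath := by
      rw [Walk.isPath_def, Walk.support_concat]
      simp only [List.concat_eq_append, List.nodup_append]
      exact ⟨hp.support_nodup, List.nodup_singleton _, by simp; intro a ha h; exact hc (h ▸ ha)⟩
    have h1 : G.dist x c2 = p.length + 1 := by
      rw [← Walk.length_concat p h]; exact (tree_length_eq_dist hT hpath).symm
    have h2 : G.dist x c1 = p.length := (tree_length_eq_dist hT hp).symm
    omega



lemma dist_le_ecc [Fintype V] (v x : V) : G.dist v x ≤ ecc G v :=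
  le_csSup (Set.finite_range _).bddAbove ⟨x, rfl⟩

lemma ecc_iso [Fintype V] (hT : G.IsTree) (φ : G ≃g G) (v : V) :
    ecc G (φ v) = ecc G v := by
  unfold ecc
  congr 1
  ext n
  constructor
  · rintro ⟨x, rfl⟩
    refine ⟨φ.symm x, ?_⟩
    have := tree_iso_dist hT φ v (φ.symm x)
    simpa using this.symm
  · rintro ⟨x, rfl⟩
    exact ⟨φ x, tree_iso_dist hT φ v x⟩

lemma tree_center [Fintype V] (hT : G.IsTree) :
    ∃ c : V, ∀ φ : G ≃g G, ∀ x, φ x = x → φ c = c := by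
  classical
  have hne : Nonempty V := hT.isConnected.nonempty
  obtain ⟨c, -, hc⟩ := Finset.exists_min_image Finset.univ (ecc G)
    ⟨Classical.arbitrary V, Finset.mem_univ _⟩
  have key : ∀ c2 : V, ecc G c2 ≤ ecc G c → c2 = c ∨ G.Adj c c2 := by
    intro c2 h2
    by_contra hcon
    push_neg at hcon
    obtain ⟨hne2, hnadj⟩ := hcon
    obtain ⟨p, hp, -⟩ := hT.existsUnique_path c c2
    have hd0 : G.dist c c2 ≠ 0 :=
      fun h => hne2 ((hT.isConnected.dist_eq_zero_iff.1 h).symm)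
    have hd1 : G.dist c c2 ≠ 1 :=
      fun h => hnadj (SimpleGraph.dist_eq_one_iff_adj.1 h)
    have hd2 : 2 ≤ G.dist c c2 := by omega
    have hplen : p.length = G.dist c c2 := tree_length_eq_dist hT hp
    set m := p.getVert 1 with hmdef
    have hm : m ∈ p.support := by
      rw [Walk.mem_support_iff_exists_getVert]
      exact ⟨1, rfl, by omega⟩
    have hnn : ¬ p.Nil := by rw [Walk.not_nil_iff_lt_length]; omega
    have hadj : G.Adj c m := Walk.adj_snd hnn
    have hm1 : G.dist c m = 1 := SimpleGraph.dist_eq_one_iff_adj.2 hadj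
    have hmne2 : m ≠ c2 := by
      intro h; rw [h] at hm1; omega
    have hmc2pos : 1 ≤ G.dist m c2 := by
      have : G.dist m c2 ≠ 0 :=
        fun h => hmne2 (hT.isConnected.dist_eq_zero_iff.1 h)
      omega
    have hbound : ∀ x : V, G.dist m x + 1 ≤ ecc G c := by
      intro x
      obtain ⟨q1, hq1, -⟩ := hT.existsUnique_path x c
      obtain ⟨q2, hq2, -⟩ := hT.existsUnique_path x c2
      rcases tree_mem_or hT hp hm q1 q2 with hx1 | hx2
      · have hs := tree_dist_split hT hq1 hx1
        have h1 : G.dist m c = 1 := by rwa [SimpleGraph.dist_comm] at hm1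
        have hle : G.dist x c ≤ ecc G c := by
          rw [SimpleGraph.dist_comm]; exact dist_le_ecc c x
        have hxm : G.dist m x = G.dist x m := SimpleGraph.dist_comm ..
        omega
      · have hs := tree_dist_split hT hq2 hx2
        have hle : G.dist x c2 ≤ ecc G c := by
          rw [SimpleGraph.dist_comm]
          exact le_trans (dist_le_ecc c2 x) h2
        have hxm : G.dist m x = G.dist x m := SimpleGraph.dist_comm ..
        omega
    have hem : ecc G m + 1 ≤ ecc G c := by
      have h1 : ecc G m ≤ ecc G c - 1 := by
        apply csSup_le (Set.range_nonempty _)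
        rintro b ⟨x, rfl⟩
        have := hbound x
        omega
      have h2 : 2 ≤ ecc G c := le_trans hd2 (dist_le_ecc c c2)
      omega
    have := hc m (Finset.mem_univ m)
    omega
  refine ⟨c, fun φ x hx => ?_⟩
  have hecc : ecc G (φ c) = ecc G c := ecc_iso hT φ c
  rcases key (φ c) (le_of_eq hecc) with h | h
  · exact h
  · exfalso
    apply tree_adj_dist_ne hT h x
    have := tree_iso_dist hT φ x c
    rw [hx] at this
    exact this.symm


lemma tree_exists_leaf_through [Fintype V] [DecidableRel G.Adj] (hT : G.IsTree)
    {c u : V} (hcu : c ≠ u) :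
    ∃ (l : V) (p : G.Walk c l), p.IsPath ∧ G.degree l = 1 ∧ u ∈ p.support := by
  classical
  have hP : ∀ x : V, ∃ p : G.Walk c x, p.IsPath := fun x =>
    ⟨(hT.existsUnique_path c x).choose, (hT.existsUnique_path c x).choose_spec.1⟩
  choose P hPp using hP
  have hPuniq : ∀ (x : V) (q : G.Walk c x), q.IsPath → q = P x := fun x q hq =>
    tree_path_unique hT hq (hPp x)
  set s : Finset V := Finset.univ.filter (fun x => u ∈ (P x).support) with hs
  have hsne : s.Nonempty := by
    refine ⟨u, ?_⟩
    simp only [hs, Finset.mem_filter, Finset.mem_univ, true_and]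
    exact Walk.end_mem_support _
  obtain ⟨x, hxs, hmax⟩ := Finset.exists_max_image s (fun x => (P x).length) hsne
  have hu : u ∈ (P x).support := by
    simpa only [hs, Finset.mem_filter, Finset.mem_univ, true_and] using hxs
  have hxc : c ≠ x := by
    rintro rfl
    have : (Walk.nil : G.Walk c c) = P c := hPuniq c Walk.nil Walk.IsPath.nil
    rw [← this] at hu
    simp only [Walk.support_nil, List.mem_singleton] at hu
    exact hcu hu.symm
  set p := P x with hpdef
  have hp : p.IsPath := hPp x
  -- every neighbor of x lies on p
  have hnbr : ∀ y, G.Adj x y → y ∈ p.support := by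
    intro y hy
    by_contra hys
    have hq : (p.concat hy).IsPath := by
      rw [Walk.isPath_def, Walk.support_concat]
      simp only [List.concat_eq_append, List.nodup_append]
      exact ⟨hp.support_nodup, List.nodup_singleton _, by simp; intro a ha h; exact hys (h ▸ ha)⟩
    have heq : p.concat hy = P y := hPuniq y _ hq
    have hys' : y ∈ s := by
      simp only [hs, Finset.mem_filter, Finset.mem_univ, true_and]
      rw [← heq, Walk.support_concat]
      simp only [List.concat_eq_append, List.mem_append]
      exact Or.inl hu
    have hle := hmax y hys'
    rw [← heq, Walk.length_concat] at hle
    omega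
  -- every neighbor of x on p equals the penultimate vertex
  have hpen : ∀ y, G.Adj x y → ∀ hm : y ∈ p.support, y = p.reverse.getVert 1 := by
    intro y hy hm
    have hxnot : x ∉ (p.takeUntil y hm).support := by
      intro hxin
      have hnd := hp.support_nodup
      rw [← Walk.take_spec p hm, Walk.support_append] at hnd
      have hxd : x ∈ ((p.dropUntil y hm).support).tail := by
        have hxe : x ∈ (p.dropUntil y hm).support := Walk.end_mem_support _
        rw [Walk.support_eq_cons (p.dropUntil y hm)] at hxe
        rcases List.mem_cons.1 hxe with h | h
        · exact absurd h hy.ne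
        · exact h
      exact (List.disjoint_of_nodup_append hnd) hxin hxd
    have hr : ((p.takeUntil y hm).concat hy.symm).IsPath := by
      rw [Walk.isPath_def, Walk.support_concat]
      simp only [List.concat_eq_append, List.nodup_append]
      exact ⟨(hp.takeUntil hm).support_nodup, List.nodup_singleton _, by simp; intro a ha h; exact hxnot (h ▸ ha)⟩
    have hre : (p.takeUntil y hm).concat hy.symm = P x := hPuniq x _ hr
    have hv1 : ((p.takeUntil y hm).concat hy.symm).reverse.getVert 1 = y := by
      rw [Walk.reverse_concat]
      exact Walk.snd_cons _ _
    rw [hre, ← hpdef] at hv1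
    exact hv1.symm
  have hnn : ¬ p.reverse.Nil := Walk.not_nil_of_ne (fun h => hxc h.symm)
  have hzadj : G.Adj x (p.reverse.getVert 1) := Walk.adj_snd hnn
  have hdeg : G.degree x = 1 := by
    have hnf : G.neighborFinset x = {p.reverse.getVert 1} := by
      ext y
      simp only [mem_neighborFinset, Finset.mem_singleton]
      constructor
      · intro hy; exact hpen y hy (hnbr y hy)
      · rintro rfl; exact hzadj
    rw [← card_neighborFinset_eq_degree, hnf, Finset.card_singleton]
  exact ⟨x, p, hp, hdeg, hu⟩


lemma tree_exchange [Fintype V] [DecidableRel G.Adj] (hT : G.IsTree) :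
    ∀ (n : ℕ) (S : Finset V), (S.filter (fun v => G.degree v ≠ 1)).card = n →
      IsFixingSet G ↑S →
    ∃ S' : Finset V, IsFixingSet G ↑S' ∧ S'.card ≤ S.card ∧ ∀ v ∈ S', G.degree v = 1 := by
  classical
  intro n
  induction n using Nat.strong_induction_on with
  | _ n ih =>
  intro S hn hS
  rcases Nat.eq_zero_or_pos n with rfl | hpos
  · refine ⟨S, hS, le_refl _, fun v hv => ?_⟩
    by_contra hd
    have : v ∈ S.filter (fun v => G.degree v ≠ 1) := Finset.mem_filter.2 ⟨hv, hd⟩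
    rw [Finset.card_eq_zero.1 hn] at this
    exact absurd this (Finset.notMem_empty v)
  · obtain ⟨u, hu⟩ := Finset.card_pos.1 (hn ▸ hpos)
    have huS : u ∈ S := (Finset.mem_filter.1 hu).1
    have hud : G.degree u ≠ 1 := (Finset.mem_filter.1 hu).2
    by_cases hdeg0 : G.degree u = 0
    · -- V is a singleton
      have hsub : ∀ v : V, v = u := by
        intro v
        by_contra hv
        obtain ⟨w⟩ := (hT.isConnected.preconnected u v)
        have hnn : ¬ w.Nil := Walk.not_nil_of_ne (fun h => hv h.symm)
        have hadj : G.Adj u (w.getVert 1) := Walk.adj_snd hnn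
        have : 0 < G.degree u := (G.degree_pos_iff_exists_adj u).2 ⟨_, hadj⟩
        omega
      refine ⟨∅, ?_, by simp, by simp⟩
      intro φ _ v
      rw [hsub v, hsub (φ u)]
    · -- anchor
      have hanchor : ∃ a : V, ∀ φ : G ≃g G,
          (∀ v ∈ S.erase u, φ v = v) → ∀ y, φ y = y → φ a = a := by
        by_cases hw : ∃ w, w ∈ S.erase u
        · obtain ⟨w, hwm⟩ := hw
          exact ⟨w, fun φ hφ _ _ => hφ w hwm⟩
        · obtain ⟨cc, hcc⟩ := tree_center hT
          exact ⟨cc, fun φ _ y hy => hcc φ y hy⟩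
      obtain ⟨a, ha⟩ := hanchor
      -- find a leaf l whose removal set works
      have hleaf : ∃ l : V, G.degree l = 1 ∧ ∀ φ : G ≃g G,
          (∀ v ∈ S.erase u, φ v = v) → φ l = l → φ u = u := by
        by_cases hau : a = u
        · -- φ fixing any vertex fixes u; pick any leaf
          obtain ⟨v0, hv0⟩ := (G.degree_pos_iff_exists_adj u).1 (Nat.pos_of_ne_zero hdeg0)
          obtain ⟨l, p, hp, hld, -⟩ := tree_exists_leaf_through hT hv0.ne
          exact ⟨l, hld, fun φ hφ hl => hau ▸ ha φ hφ l hl⟩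
        · obtain ⟨l, p, hp, hld, hup⟩ := tree_exists_leaf_through hT
            (show a ≠ u from hau)
          refine ⟨l, hld, fun φ hφ hl => ?_⟩
          have hfa : φ a = a := ha φ hφ l hl
          exact tree_fix_path hT φ hfa hl hp u hup
      obtain ⟨l, hld, hl⟩ := hleaf
      set S' : Finset V := insert l (S.erase u) with hS'
      have hS'fix : IsFixingSet G ↑S' := by
        intro φ hφ
        have hφ' : ∀ v ∈ S.erase u, φ v = v := fun v hv =>
          hφ v (by exact_mod_cast Finset.mem_insert_of_mem hv)
        have hφl : φ l = l := hφ l (by exact_mod_cast Finset.mem_insert_self l _)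
        have hφu : φ u = u := hl φ hφ' hφl
        apply hS φ
        intro v hv
        rcases eq_or_ne v u with rfl | hne
        · exact hφu
        · exact hφ' v (Finset.mem_erase.2 ⟨hne, hv⟩)
      have hcard : S'.card ≤ S.card := by
        calc S'.card ≤ (S.erase u).card + 1 := Finset.card_insert_le _ _
          _ = S.card - 1 + 1 := by rw [Finset.card_erase_of_mem huS]
          _ ≤ S.card := by
              have : 1 ≤ S.card := Finset.card_pos.2 ⟨u, huS⟩
              omega
      -- non-leaf count decreases
      have hdec : (S'.filter (fun v => G.degree v ≠ 1)).card < n := by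
        have hsubset : S'.filter (fun v => G.degree v ≠ 1) ⊆
            (S.filter (fun v => G.degree v ≠ 1)).erase u := by
          intro v hv
          obtain ⟨hv1, hv2⟩ := Finset.mem_filter.1 hv
          rcases Finset.mem_insert.1 hv1 with rfl | hv3
          · exact absurd hld hv2
          · exact Finset.mem_erase.2 ⟨(Finset.mem_erase.1 hv3).1,
              Finset.mem_filter.2 ⟨(Finset.mem_erase.1 hv3).2, hv2⟩⟩
        calc (S'.filter (fun v => G.degree v ≠ 1)).card
            ≤ ((S.filter (fun v => G.degree v ≠ 1)).erase u).card :=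
              Finset.card_le_card hsubset
          _ = n - 1 := by rw [Finset.card_erase_of_mem hu, hn]
          _ < n := by omega
      obtain ⟨S'', h1, h2, h3⟩ := ih _ hdec S' rfl hS'fix
      exact ⟨S'', h1, le_trans h2 hcard, h3⟩


end TreeAux

theorem exists_min_fixing_set_of_leaves
    {V : Type*} [Fintype V] (G : SimpleGraph V) [DecidableRel G.Adj]
    (hT : G.IsTree) :
    ∃ S : Finset V, IsFixingSet G ↑S ∧ S.card = fixingNumber G ∧
      ∀ v ∈ S, G.degree v = 1 := by
  classical
  have hne : {n | ∃ S : Finset V, S.card = n ∧ IsFixingSet G ↑S}.Nonempty :=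
    ⟨(Finset.univ : Finset V).card, Finset.univ, rfl,
      fun φ h v => h v (by simp)⟩
  obtain ⟨S, hScard, hSfix⟩ := Nat.sInf_mem hne
  obtain ⟨S', h1, h2, h3⟩ := tree_exchange hT _ S rfl hSfix
  refine ⟨S', h1, ?_, h3⟩
  have hle : fixingNumber G ≤ S'.card := Nat.sInf_le ⟨S', rfl, h1⟩
  have hge : S'.card ≤ fixingNumber G := by
    rw [fixingNumber, ← hScard]
    exact h2
  omega
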